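/- arXiv:2109.01131 — 2 statements merged into one kernel-verified Lean document; each statement's English description precedes it below -/
import Mathlib

section
/- Let D ⊆ ℕ⁺ be ∅-definable and cofinal with respect to divisibility (for every c ∈ ℕ⁺ there exists d ∈ D with c ∣ d). Then for every c ∈ ℕ⁺ there exist k ∈ ℕ, elements d₁,…,d_k ∈ D, and an L-formula θ(v; w₁,…,w_k) such that c is the unique element of ℕ⁺ satisfying θ(·; d₁,…,d_k) in ℕ⁺. -/
open FirstOrder Language

/-- The language `L` with one binary function symbol `·` and one constant symbol `1`. -/
def L : FirstOrder.Language :=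
  ⟨fun n => match n with | 0 => Unit | 2 => Unit | _ => Empty, fun _ => Empty⟩

/-- Any monoid is an `L`-structure, with `·` interpreted as multiplication and `1` as the
identity. In particular `ℕ+` is the standard model of Skolem arithmetic, and
`Multiplicative ℕ` is the additive `L`-structure `(ℕ, +, 0)`. -/
instance (M : Type*) [Monoid M] : L.Structure M where
  funMap {n} f x :=
    match n, f, x with
    | 0, _, _ => 1
    | 2, _, x => x 0 * x 1
  RelMap r _ := r.elim

/-! ### Term and formula toolkit -/

def mulF : L.Functions 2 := ()
def oneC : L.Constants := ()

section terms

variable {M : Type*} [Monoid M] {α : Type*}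

@[simp] lemma funMap_zero (f : L.Functions 0) (x : Fin 0 → M) :
    Structure.funMap f x = 1 := rfl

@[simp] lemma funMap_two (f : L.Functions 2) (x : Fin 2 → M) :
    Structure.funMap f x = x 0 * x 1 := rfl

def tOne : L.Term α := Constants.term oneC
def tMul (t s : L.Term α) : L.Term α := Functions.apply₂ mulF t s
def tPow (t : L.Term α) : ℕ → L.Term α
  | 0 => tOne
  | n+1 => tMul (tPow t n) t
def tProd : List (L.Term α) → L.Term α
  | [] => tOne
  | t :: ts => tMul t (tProd ts)

@[simp] lemma realize_tOne (v : α → M) : (tOne : L.Term α).realize v = 1 := by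
  simp [tOne, Term.realize]; rfl

@[simp] lemma realize_tMul (v : α → M) (t s : L.Term α) :
    (tMul t s).realize v = t.realize v * s.realize v := by
  simp [tMul, Functions.apply₂, Term.realize]

@[simp] lemma realize_tPow (v : α → M) (t : L.Term α) (n : ℕ) :
    (tPow t n).realize v = t.realize v ^ n := by
  induction n with
  | zero => simp [tPow]
  | succ n ih => simp [tPow, ih, pow_succ]

@[simp] lemma realize_tProd (v : α → M) (l : List (L.Term α)) :
    (tProd l).realize v = (l.map (fun t => t.realize v)).prod := by
  induction l with
  | nil => simp [tProd]
  | cons t ts ih => simp [tProd, ih]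

/-- divisibility formula: ∃ z, t * z = s -/
noncomputable def dvdF (t s : L.Term α) : L.Formula α :=
  Formula.iExs Unit
    (Term.equal (tMul (t.relabel Sum.inl) (Term.var (Sum.inr ()))) (s.relabel Sum.inl))

@[simp] lemma realize_dvdF (v : α → M) (t s : L.Term α) :
    (dvdF t s).Realize v ↔ t.realize v ∣ s.realize v := by
  simp only [dvdF, Formula.realize_iExs, Formula.realize_equal, realize_tMul,
    Term.realize_relabel]
  constructor
  · rintro ⟨i, h⟩
    exact ⟨i (), by simpa using h.symm⟩
  · rintro ⟨z, h⟩
    exact ⟨fun _ => z, by simpa using h.symm⟩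

/-- primality formula: t ≠ 1 ∧ ∀ z (z ∣ t → z = 1 ∨ z = t) -/
noncomputable def primeF (t : L.Term α) : L.Formula α :=
  (∼(Term.equal t tOne)) ⊓
  (Formula.iAlls Unit
    ((dvdF (Term.var (Sum.inr ())) (t.relabel Sum.inl)) ⟹
      ((Term.equal (Term.var (Sum.inr ())) tOne) ⊔
       (Term.equal (Term.var (Sum.inr ())) (t.relabel Sum.inl)))))

@[simp] lemma realize_primeF (v : α → M) (t : L.Term α) :
    (primeF t).Realize v ↔
      (t.realize v ≠ 1 ∧ ∀ z : M, z ∣ t.realize v → z = 1 ∨ z = t.realize v) := by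
  simp only [primeF, Formula.realize_inf, Formula.realize_not, Formula.realize_equal,
    realize_tOne, Formula.realize_iAlls, Formula.realize_imp, realize_dvdF,
    Formula.realize_sup, Term.realize_relabel, Term.realize_var]
  constructor
  · rintro ⟨h1, h2⟩
    refine ⟨h1, fun z hz => ?_⟩
    have := h2 (fun _ => z)
    simpa using this hz
  · rintro ⟨h1, h2⟩
    refine ⟨h1, fun i => ?_⟩
    intro h
    simpa using h2 (i ()) (by simpa using h)

end terms

/-! ### PNat primality via divisors -/

lemma pnat_prime_iff (y : ℕ+) :
    (y : ℕ).Prime ↔ (y ≠ 1 ∧ ∀ z : ℕ+, z ∣ y → z = 1 ∨ z = y) := by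
  constructor
  · intro hy
    refine ⟨fun h => hy.ne_one (by rw [h]; rfl), fun z hz => ?_⟩
    have : (z : ℕ) ∣ (y : ℕ) := PNat.dvd_iff.mp hz
    rcases (Nat.Prime.eq_one_or_self_of_dvd hy _ this) with h | h
    · left; exact PNat.coe_injective h
    · right; exact PNat.coe_injective h
  · rintro ⟨h1, h2⟩
    rw [Nat.prime_def]
    constructor
    · rcases Nat.lt_or_ge (y : ℕ) 2 with h | h
      · exfalso
        interval_cases hy : (y : ℕ)
        · exact y.ne_zero hy
        · exact h1 (PNat.coe_injective hy)
      · exact h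
    · intro m hm
      have hm0 : 0 < m := Nat.pos_of_dvd_of_pos hm y.pos
      have := h2 ⟨m, hm0⟩ (PNat.dvd_iff.mpr hm)
      rcases this with h | h
      · left; exact congrArg PNat.val h
      · right; exact congrArg PNat.val h

/-! ### Prime-permutation automorphisms of ℕ+ -/

section perm

variable (e : ℕ ≃ ℕ) (he : ∀ p, (e p).Prime ↔ p.Prime)

include he in
/-- apply a prime-preserving permutation of ℕ to the prime factorization -/
noncomputable def permPNat (n : ℕ+) : ℕ+ :=
  ⟨(Finsupp.equivMapDomain e (n : ℕ).factorization).prod (· ^ ·), by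
    apply Nat.prod_pow_pos_of_zero_notMem_support
    intro H
    have h0 : (Finsupp.equivMapDomain e (n : ℕ).factorization) 0 ≠ 0 :=
      Finsupp.mem_support_iff.mp H
    rw [Finsupp.equivMapDomain_apply] at h0
    have hmem : (e.symm 0) ∈ (n : ℕ).primeFactors := by
      rw [← Nat.support_factorization]; exact Finsupp.mem_support_iff.mpr h0
    have hp : (e.symm 0).Prime := Nat.prime_of_mem_primeFactors hmem
    have h00 : (0 : ℕ).Prime := by
      have := (he (e.symm 0)).mpr hp
      simpa using this
    exact Nat.not_prime_zero h00⟩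

include he in
lemma permPNat_support_prime (n : ℕ+) :
    ∀ p ∈ (Finsupp.equivMapDomain e (n : ℕ).factorization).support, Nat.Prime p := by
  intro p hp
  rw [Finsupp.mem_support_iff, Finsupp.equivMapDomain_apply] at hp
  have hmem : (e.symm p) ∈ (n : ℕ).primeFactors := by
    rw [← Nat.support_factorization]; exact Finsupp.mem_support_iff.mpr hp
  have hsp : (e.symm p).Prime := Nat.prime_of_mem_primeFactors hmem
  have := (he (e.symm p)).mpr hsp
  simpa using this

lemma factorization_permPNat (n : ℕ+) :
    ((permPNat e he n : ℕ)).factorization = Finsupp.equivMapDomain e (n : ℕ).factorization :=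
  Nat.prod_pow_factorization_eq_self (permPNat_support_prime e he n)

lemma factorization_permPNat_apply (n : ℕ+) (q : ℕ) :
    ((permPNat e he n : ℕ)).factorization q = (n : ℕ).factorization (e.symm q) := by
  rw [factorization_permPNat, Finsupp.equivMapDomain_apply]

lemma permPNat_mul (m n : ℕ+) :
    permPNat e he (m * n) = permPNat e he m * permPNat e he n := by
  apply PNat.coe_injective
  have h1 : (((m * n : ℕ+)) : ℕ).factorization
      = (m : ℕ).factorization + (n : ℕ).factorization := by
    rw [PNat.mul_coe]
    exact Nat.factorization_mul m.ne_zero n.ne_zero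
  have h2 : Finsupp.equivMapDomain e (((m * n : ℕ+)) : ℕ).factorization
      = Finsupp.equivMapDomain e (m : ℕ).factorization
        + Finsupp.equivMapDomain e (n : ℕ).factorization := by
    rw [h1]; ext b; simp [Finsupp.equivMapDomain_apply]
  show (Finsupp.equivMapDomain e (((m * n : ℕ+)) : ℕ).factorization).prod (· ^ ·) = _
  rw [h2]
  rw [Finsupp.prod_add_index (fun a _ => pow_zero a) (fun a _ b c => pow_add a b c)]
  rfl

lemma permPNat_comp (e' : ℕ ≃ ℕ) (he' : ∀ p, (e' p).Prime ↔ p.Prime) (n : ℕ+) :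
    permPNat e' he' (permPNat e he n) = permPNat (e.trans e') (by
      intro p; rw [Equiv.trans_apply, he', he]) n := by
  apply PNat.coe_injective
  show (Finsupp.equivMapDomain e' ((permPNat e he n : ℕ)).factorization).prod (· ^ ·) = _
  rw [factorization_permPNat e he n, ← Finsupp.equivMapDomain_trans]
  rfl

lemma permPNat_refl (n : ℕ+) : permPNat (Equiv.refl ℕ) (fun _ => Iff.rfl) n = n := by
  apply PNat.coe_injective
  show (Finsupp.equivMapDomain (Equiv.refl ℕ) (n : ℕ).factorization).prod (· ^ ·) = _
  rw [Finsupp.equivMapDomain_refl]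
  exact Nat.factorization_prod_pow_eq_self n.ne_zero

lemma permPNat_congr (e' : ℕ ≃ ℕ) (he' : ∀ p, (e' p).Prime ↔ p.Prime) (h : e = e') (n : ℕ+) :
    permPNat e he n = permPNat e' he' n := by subst h; rfl

/-- the L-automorphism of ℕ+ induced by a prime-preserving permutation -/
noncomputable def permLEquiv : L.Equiv ℕ+ ℕ+ where
  toFun := permPNat e he
  invFun := permPNat e.symm (fun p => by
    conv_rhs => rw [← Equiv.apply_symm_apply e p]
    exact (he (e.symm p)).symm)
  left_inv := fun n => by
    rw [permPNat_comp]
    rw [permPNat_congr _ _ (Equiv.refl ℕ) (fun _ => Iff.rfl) (by ext x; simp)]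
    exact permPNat_refl n
  right_inv := fun n => by
    rw [permPNat_comp]
    rw [permPNat_congr _ _ (Equiv.refl ℕ) (fun _ => Iff.rfl) (by ext x; simp)]
    exact permPNat_refl n
  map_fun' := by
    intro n f x
    match n, f with
    | 0, f =>
      show permPNat e he 1 = 1
      exact PNat.coe_injective (by
        show (Finsupp.equivMapDomain e ((1 : ℕ+) : ℕ).factorization).prod (· ^ ·) = 1
        simp)
    | 2, f =>
      show permPNat e he (x 0 * x 1) = permPNat e he (x 0) * permPNat e he (x 1)
      exact permPNat_mul e he (x 0) (x 1)
  map_rel' := by intro n r x; exact r.elim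

end perm

/-! ### ∅-definable sets are invariant under prime permutations; separation lemma -/

lemma mem_of_perm {D : Set ℕ+}
    (hdef : ∃ φ : L.Formula (Fin 1), D = {a | φ.Realize (fun _ => a)})
    (e : ℕ ≃ ℕ) (he : ∀ p, (e p).Prime ↔ p.Prime) {d : ℕ+} (hd : d ∈ D) :
    permPNat e he d ∈ D := by
  obtain ⟨φ, rfl⟩ := hdef
  have := (StrongHomClass.realize_formula (permLEquiv e he) φ (v := fun _ : Fin 1 => d)).mpr hd
  exact this

lemma swap_prime {q z : ℕ} (hq : q.Prime) (hz : z.Prime) :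
    ∀ p, ((Equiv.swap q z) p).Prime ↔ p.Prime := by
  intro p
  rcases eq_or_ne p q with rfl | hpq
  · simp [Equiv.swap_apply_left, hz, hq]
  rcases eq_or_ne p z with rfl | hpz
  · simp [Equiv.swap_apply_right, hz, hq]
  · rw [Equiv.swap_apply_of_ne_of_ne hpq hpz]

/-- separation: some element of `D` has positive `p`-valuation and zero `q`-valuation. -/
lemma separation {D : Set ℕ+}
    (hdef : ∃ φ : L.Formula (Fin 1), D = {a | φ.Realize (fun _ => a)})
    (hcof : ∀ c : ℕ+, ∃ d ∈ D, c ∣ d)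
    {p q : ℕ} (hp : p.Prime) (hq : q.Prime) (hpq : p ≠ q) :
    ∃ d ∈ D, 1 ≤ (d : ℕ).factorization p ∧ (d : ℕ).factorization q = 0 := by
  obtain ⟨f, hfD, hpf⟩ := hcof ⟨p, hp.pos⟩
  obtain ⟨z, hzge, hz⟩ := Nat.exists_infinite_primes ((f : ℕ) + p + q + 1)
  have hzf : z ∉ (f : ℕ).primeFactors := by
    intro h
    have := Nat.le_of_mem_primeFactors h
    omega
  have hzp : z ≠ p := by omega
  have hzq : z ≠ q := by omega
  set e := Equiv.swap q z with hE
  have he := swap_prime hq hz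
  refine ⟨permPNat e he f, mem_of_perm hdef e he hfD, ?_, ?_⟩
  · rw [factorization_permPNat_apply]
    have hsymm : e.symm p = p := by
      rw [hE, Equiv.symm_swap]
      exact Equiv.swap_apply_of_ne_of_ne hpq (Ne.symm hzp)
    rw [hsymm]
    have hdvd : (p : ℕ) ∣ (f : ℕ) := PNat.dvd_iff.mp hpf
    exact Nat.Prime.factorization_pos_of_dvd hp f.ne_zero hdvd
  · rw [factorization_permPNat_apply]
    have hsymm : e.symm q = z := by
      rw [hE, Equiv.symm_swap, Equiv.swap_apply_left]
    rw [hsymm]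
    rw [← Finsupp.notMem_support_iff, Nat.support_factorization]
    exact hzf

/-! ### Finite conjunction of formulas -/

noncomputable def FiInf {α β : Type*} [Fintype β] (f : β → L.Formula α) : L.Formula α :=
  BoundedFormula.iInf f

@[simp] lemma realize_FiInf {M : Type*} [Monoid M] {α β : Type*} [Fintype β]
    (f : β → L.Formula α) (v : α → M) :
    (FiInf f).Realize v ↔ ∀ b, (f b).Realize v := by
  rw [FiInf, Formula.Realize, BoundedFormula.realize_iInf]
  simp [Formula.Realize]

/-- If `D ⊆ ℕ⁺` is `∅`-definable and cofinal with respect to divisibility, then every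
element of `ℕ⁺` is definable over finitely many elements of `D`. -/
theorem cofinal_dcl_everything (D : Set ℕ+)
    (hdef : ∃ φ : L.Formula (Fin 1), D = {a | φ.Realize (fun _ => a)})
    (hcof : ∀ c : ℕ+, ∃ d ∈ D, c ∣ d) :
    ∀ c : ℕ+, ∃ (k : ℕ) (d : Fin k → ℕ+) (θ : L.Formula (Unit ⊕ Fin k)),
      (∀ i, d i ∈ D) ∧ ∀ x : ℕ+, θ.Realize (Sum.elim (fun _ => x) d) ↔ x = c := by
  intro c
  classical
  set S : Finset ℕ := (c : ℕ).primeFactors with hS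
  have hSprime : ∀ p : ↥S, (p : ℕ).Prime := fun p => Nat.prime_of_mem_primeFactors p.2
  -- base parameters: an element of D divisible by p
  have h1 : ∀ p : ↥S, ∃ d ∈ D, 1 ≤ (d : ℕ).factorization (p : ℕ) := by
    intro p
    obtain ⟨d, hdD, hdvd⟩ := hcof ⟨(p : ℕ), (hSprime p).pos⟩
    exact ⟨d, hdD,
      Nat.Prime.factorization_pos_of_dvd (hSprime p) d.ne_zero (PNat.dvd_iff.mp hdvd)⟩
  choose d0 hd0D hd0v using h1
  -- the clones of p in d0 p
  set Q : ↥S → Finset ℕ := fun p => ((d0 p : ℕ)).primeFactors.filter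
    (fun q => q ≠ (p : ℕ) ∧
      (d0 p : ℕ).factorization q = (d0 p : ℕ).factorization (p : ℕ)) with hQ
  have h2 : ∀ p : ↥S, ∀ q : ↥(Q p), ∃ d ∈ D,
      1 ≤ (d : ℕ).factorization (p : ℕ) ∧ (d : ℕ).factorization (q : ℕ) = 0 := by
    intro p q
    have hq : (q : ℕ) ∈ ((d0 p : ℕ)).primeFactors.filter
        (fun r => r ≠ (p : ℕ) ∧
          (d0 p : ℕ).factorization r = (d0 p : ℕ).factorization (p : ℕ)) := q.2
    rw [Finset.mem_filter] at hq
    exact separation hdef hcof (hSprime p) (Nat.prime_of_mem_primeFactors hq.1)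
      (Ne.symm hq.2.1)
  choose dk hdkD hdk1 hdk0 using h2
  -- index type for the parameters
  let I := Σ p : ↥S, Option ↥(Q p)
  let dI : I → ℕ+ := fun i => Option.elim i.2 (d0 i.1) (fun q => dk i.1 q)
  let tI : I → ℕ := fun i => ((dI i : ℕ)).factorization ((i.1 : ℕ))
  have hdID : ∀ i, dI i ∈ D := by
    rintro ⟨p, (_ | q)⟩
    · exact hd0D p
    · exact hdkD p q
  -- the formula
  let V := (Unit ⊕ I) ⊕ ↥S
  let xvar : L.Term V := Term.var (Sum.inl (Sum.inl ()))
  let dvar : I → L.Term V := fun i => Term.var (Sum.inl (Sum.inr i))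
  let wvar : ↥S → L.Term V := fun p => Term.var (Sum.inr p)
  let ψ : L.Formula V :=
    (FiInf (fun i : I =>
      (dvdF (tPow (wvar i.1) (tI i)) (dvar i)) ⊓
        ∼(dvdF (tPow (wvar i.1) (tI i + 1)) (dvar i)))) ⊓
    ((FiInf (fun p : ↥S => primeF (wvar p))) ⊓
      (Term.equal xvar (tProd (Finset.univ.toList.map
        (fun p : ↥S => tPow (wvar p) ((c : ℕ).factorization (p : ℕ)))))))
  let θ₀ : L.Formula (Unit ⊕ I) := Formula.iExs ↥S ψ
  -- the product of the primes of c with their multiplicities is c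
  have hprod : ∏ p : ↥S, (⟨(p : ℕ), (hSprime p).pos⟩ : ℕ+) ^ ((c : ℕ).factorization (p : ℕ))
      = c := by
    apply PNat.coe_injective
    have h1 : (PNat.coeMonoidHom (∏ p : ↥S, (⟨(p : ℕ), (hSprime p).pos⟩ : ℕ+) ^
          ((c : ℕ).factorization (p : ℕ))) : ℕ)
        = ∏ p : ↥S, (PNat.coeMonoidHom ((⟨(p : ℕ), (hSprime p).pos⟩ : ℕ+) ^
          ((c : ℕ).factorization (p : ℕ))) : ℕ) :=
      map_prod PNat.coeMonoidHom _ Finset.univ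
    have h2 : ∀ p : ↥S, (PNat.coeMonoidHom ((⟨(p : ℕ), (hSprime p).pos⟩ : ℕ+) ^
          ((c : ℕ).factorization (p : ℕ))) : ℕ) = (p : ℕ) ^ ((c : ℕ).factorization (p : ℕ)) :=
      fun p => PNat.pow_coe _ _
    have h3 : ((∏ p : ↥S, (⟨(p : ℕ), (hSprime p).pos⟩ : ℕ+) ^
          ((c : ℕ).factorization (p : ℕ)) : ℕ+) : ℕ)
        = ∏ p : ↥S, (p : ℕ) ^ ((c : ℕ).factorization (p : ℕ)) := by
      rw [show ((∏ p : ↥S, (⟨(p : ℕ), (hSprime p).pos⟩ : ℕ+) ^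
          ((c : ℕ).factorization (p : ℕ)) : ℕ+) : ℕ)
        = (PNat.coeMonoidHom (∏ p : ↥S, (⟨(p : ℕ), (hSprime p).pos⟩ : ℕ+) ^
          ((c : ℕ).factorization (p : ℕ))) : ℕ) from rfl, h1]
      exact Finset.prod_congr rfl fun p _ => h2 p
    refine h3.trans ?_
    have h4 : ∏ p : ↥S, (p : ℕ) ^ ((c : ℕ).factorization (p : ℕ))
        = ∏ q ∈ S, q ^ ((c : ℕ).factorization q) :=
      Finset.prod_coe_sort S (fun q => q ^ ((c : ℕ).factorization q))
    rw [h4]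
    conv_rhs => rw [← Nat.factorization_prod_pow_eq_self c.ne_zero]
    rw [Finsupp.prod, Nat.support_factorization]
  -- realization of θ₀
  have key : ∀ x : ℕ+, θ₀.Realize (Sum.elim (fun _ => x) dI) ↔ x = c := by
    intro x
    have hrealize : θ₀.Realize (Sum.elim (fun _ => x) dI) ↔
        ∃ w : ↥S → ℕ+,
          (∀ i : I, (w i.1) ^ (tI i) ∣ dI i ∧ ¬ (w i.1) ^ (tI i + 1) ∣ dI i) ∧
          (∀ p : ↥S, w p ≠ 1 ∧ ∀ z : ℕ+, z ∣ w p → z = 1 ∨ z = w p) ∧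
          x = ∏ p : ↥S, (w p) ^ ((c : ℕ).factorization (p : ℕ)) := by
      simp only [θ₀, Formula.realize_iExs, id]
      refine exists_congr fun w => ?_
      simp only [ψ, xvar, dvar, wvar, Formula.realize_inf, realize_FiInf,
        Formula.realize_not, realize_dvdF, realize_primeF, Formula.realize_equal,
        realize_tPow, realize_tProd, Term.realize_var, Sum.elim_inl, Sum.elim_inr,
        List.map_map, Function.comp_def, Finset.prod_map_toList]
    rw [hrealize]
    constructor
    · rintro ⟨w, hdvd, hprime, hx⟩
      have hwp : ∀ p : ↥S, w p = ⟨(p : ℕ), (hSprime p).pos⟩ := by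
        intro p
        have hwprime : ((w p : ℕ)).Prime := by
          rw [pnat_prime_iff]; exact hprime p
        set r := ((w p : ℕ)) with hr
        have hval : ∀ o : Option ↥(Q p),
            ((dI ⟨p, o⟩ : ℕ)).factorization r = tI ⟨p, o⟩ := by
          intro o
          obtain ⟨h1, h2⟩ := hdvd ⟨p, o⟩
          have h1' : r ^ (tI ⟨p, o⟩) ∣ (dI ⟨p, o⟩ : ℕ) := by
            have := PNat.dvd_iff.mp h1; rwa [PNat.pow_coe] at this
          have h2' : ¬ r ^ (tI ⟨p, o⟩ + 1) ∣ (dI ⟨p, o⟩ : ℕ) := by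
            intro hcon
            exact h2 (PNat.dvd_iff.mpr (by rwa [PNat.pow_coe]))
          rw [Nat.Prime.pow_dvd_iff_le_factorization hwprime (dI ⟨p, o⟩).ne_zero] at h1'
          rw [Nat.Prime.pow_dvd_iff_le_factorization hwprime (dI ⟨p, o⟩).ne_zero] at h2'
          omega
        have hrp : r = (p : ℕ) := by
          by_contra hne
          by_cases hmem : r ∈ Q p
          · have h0 : ((dk p ⟨r, hmem⟩ : ℕ)).factorization r = 0 := hdk0 p ⟨r, hmem⟩
            have h1 : 1 ≤ ((dk p ⟨r, hmem⟩ : ℕ)).factorization (p : ℕ) := hdk1 p ⟨r, hmem⟩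
            have h2 := hval (some ⟨r, hmem⟩)
            have h3 : dI ⟨p, some ⟨r, hmem⟩⟩ = dk p ⟨r, hmem⟩ := rfl
            have h4 : tI ⟨p, some ⟨r, hmem⟩⟩
                = ((dk p ⟨r, hmem⟩ : ℕ)).factorization (p : ℕ) := rfl
            rw [h3, h4] at h2
            omega
          · have h2 := hval none
            have h3 : dI ⟨p, none⟩ = d0 p := rfl
            have h4 : tI ⟨p, none⟩ = ((d0 p : ℕ)).factorization (p : ℕ) := rfl
            rw [h3, h4] at h2
            have hge := hd0v p
            apply hmem
            have hrdvd : r ∈ ((d0 p : ℕ)).primeFactors := by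
              rw [← Nat.support_factorization, Finsupp.mem_support_iff]
              omega
            show r ∈ Finset.filter _ _
            rw [Finset.mem_filter]
            exact ⟨hrdvd, hne, h2⟩
        exact PNat.coe_injective hrp
      have hxw : (∏ p : ↥S, w p ^ ((c : ℕ).factorization (p : ℕ)))
          = ∏ p : ↥S, (⟨(p : ℕ), (hSprime p).pos⟩ : ℕ+) ^ ((c : ℕ).factorization (p : ℕ)) :=
        Finset.prod_congr rfl fun p _ => by rw [hwp p]; rfl
      rw [hx, hxw]
      exact hprod
    · rintro rfl
      refine ⟨fun p => ⟨(p : ℕ), (hSprime p).pos⟩, ?_, ?_, hprod.symm⟩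
      · rintro ⟨p, o⟩
        constructor
        · apply PNat.dvd_iff.mpr
          show (p : ℕ) ^ tI ⟨p, o⟩ ∣ _
          exact (Nat.Prime.pow_dvd_iff_le_factorization (hSprime p)
            (dI ⟨p, o⟩).ne_zero).mpr le_rfl
        · intro hcon
          have hcon' := PNat.dvd_iff.mp hcon
          change (p : ℕ) ^ (tI ⟨p, o⟩ + 1) ∣ _ at hcon'
          exact Nat.pow_succ_factorization_not_dvd (dI ⟨p, o⟩).ne_zero (hSprime p) hcon'
      · intro p
        have := (pnat_prime_iff (⟨(p : ℕ), (hSprime p).pos⟩ : ℕ+)).mp (hSprime p)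
        exact this
  -- re-index the parameters by Fin k
  let k := Fintype.card I
  let eI : I ≃ Fin k := Fintype.equivFin I
  refine ⟨k, dI ∘ eI.symm, θ₀.relabel (Sum.map id eI), fun i => hdID _, fun x => ?_⟩
  rw [Formula.realize_relabel]
  have hcomp : (Sum.elim (fun _ : Unit => x) (dI ∘ eI.symm)) ∘ (Sum.map id eI)
      = Sum.elim (fun _ => x) dI := by
    funext a
    rcases a with a | i <;> simp
  rw [hcomp, key]
end

section
/- Let F ⊆ ℕ⁺ be ∅-definable with some element of F different from 1. Then for every prime p there exist f₁, f₂ ∈ F such that the intersection of the set of prime divisors of f₁ with the set of prime divisors of f₂ is exactly {p}. In particular, p is the unique prime dividing both f₁ and f₂, so p is definable over {f₁, f₂}. -/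
open FirstOrder Language

/-- The set of prime divisors of `a` (as positive naturals). -/
def sigma' (a : ℕ+) : Set ℕ+ := {p | (p : ℕ).Prime ∧ p ∣ a}

/-- The multiplicative automorphism of `ℕ+` induced by a permutation of the primes. -/
noncomputable def permAut (σ : Equiv.Perm Nat.Primes) : ℕ+ ≃* ℕ+ where
  toFun n := PrimeMultiset.prod (Multiset.map σ (PNat.factorMultiset n))
  invFun n := PrimeMultiset.prod (Multiset.map σ.symm (PNat.factorMultiset n))
  left_inv n := by
    show PrimeMultiset.prod (Multiset.map σ.symm (PNat.factorMultiset (PrimeMultiset.prod _))) = n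
    erw [PrimeMultiset.factorMultiset_prod]
    show PrimeMultiset.prod (Multiset.map σ.symm (Multiset.map σ (PNat.factorMultiset n))) = n
    erw [Multiset.map_map]
    simp only [Equiv.symm_comp_self, Multiset.map_id]
    erw [Multiset.map_id]
    exact PNat.prod_factorMultiset n
  right_inv n := by
    show PrimeMultiset.prod (Multiset.map σ (PNat.factorMultiset (PrimeMultiset.prod _))) = n
    erw [PrimeMultiset.factorMultiset_prod]
    show PrimeMultiset.prod (Multiset.map σ (Multiset.map σ.symm (PNat.factorMultiset n))) = n
    erw [Multiset.map_map]
    simp only [Equiv.self_comp_symm, Multiset.map_id]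
    erw [Multiset.map_id]
    exact PNat.prod_factorMultiset n
  map_mul' m n := by
    show PrimeMultiset.prod (Multiset.map σ (PNat.factorMultiset (m * n))) = _
    rw [PNat.factorMultiset_mul]
    show PrimeMultiset.prod (Multiset.map σ (PNat.factorMultiset m + PNat.factorMultiset n)) = _
    erw [Multiset.map_add]
    exact PrimeMultiset.prod_add _ _

/-- A multiplicative equiv of `ℕ+` is an `L`-equiv. -/
def toLEquiv (g : ℕ+ ≃* ℕ+) : ℕ+ ≃[L] ℕ+ where
  toEquiv := g.toEquiv
  map_fun' := fun {n} f x => by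
    match n, f with
    | 0, _ => exact map_one g
    | 2, _ => exact map_mul g (x 0) (x 1)
  map_rel' := fun {n} r => r.elim

/-- A ∅-definable set is closed under multiplicative automorphisms. -/
lemma mem_of_def {F : Set ℕ+} {φ : L.Formula (Fin 1)}
    (hF : F = {a | φ.Realize (fun _ => a)}) (g : ℕ+ ≃* ℕ+) {x : ℕ+} (hx : x ∈ F) :
    g x ∈ F := by
  rw [hF] at hx ⊢
  exact (StrongHomClass.realize_formula (toLEquiv g) φ (v := fun _ => x)).2 hx

/-- An injection on a finite subset of a countably infinite type extends to a permutation. -/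
lemma exists_perm_extend {α : Type*} [Infinite α] [Countable α]
    (f : α → α) (s : Set α) (hs : s.Finite) (hf : Set.InjOn f s) :
    ∃ σ : Equiv.Perm α, ∀ x ∈ s, σ x = f x := by
  classical
  have ht : (f '' s).Finite := hs.image f
  have h1 : (sᶜ : Set α).Infinite := hs.infinite_compl
  have h2 : ((f '' s)ᶜ : Set α).Infinite := ht.infinite_compl
  have : Nonempty ((sᶜ : Set α) ≃ ((f '' s)ᶜ : Set α)) := by
    have := h1.to_subtype
    have := h2.to_subtype
    exact nonempty_equiv_of_countable
  obtain ⟨e₁⟩ := this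
  obtain ⟨σ, hσ⟩ := ((Equiv.Set.compl (Equiv.Set.imageOfInjOn f s hf)).symm e₁)
  exact ⟨σ, fun x hx => hσ ⟨x, hx⟩⟩

lemma prime_dvd_prod_iff (Y : Nat.Primes) (v : Multiset Nat.Primes) :
    (Y : ℕ+) ∣ PrimeMultiset.prod v ↔ Y ∈ v := by
  have h := @PrimeMultiset.prod_dvd_iff (PrimeMultiset.ofPrime Y) v
  rw [PrimeMultiset.prod_ofPrime] at h
  rw [h]
  exact Multiset.singleton_le

lemma mem_sigma'_prod (v : Multiset Nat.Primes) (y : ℕ+) :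
    y ∈ sigma' (PrimeMultiset.prod v) ↔ ∃ Y ∈ v, (Y : ℕ+) = y := by
  constructor
  · rintro ⟨hyp, hdvd⟩
    refine ⟨⟨(y : ℕ), hyp⟩, ?_, rfl⟩
    rwa [← prime_dvd_prod_iff ⟨(y : ℕ), hyp⟩ v]
  · rintro ⟨Y, hY, rfl⟩
    exact ⟨Y.2, (prime_dvd_prod_iff Y v).2 hY⟩

/-- If `F ⊆ ℕ⁺` is `∅`-definable and contains an element other than `1`, then every prime
is the unique common prime divisor of two elements of `F`. -/
theorem prime_definable_over_two_elements (F : Set ℕ+)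
    (hdef : ∃ φ : L.Formula (Fin 1), F = {a | φ.Realize (fun _ => a)})
    (hne : ∃ x ∈ F, x ≠ 1) :
    ∀ p : ℕ+, (p : ℕ).Prime →
      ∃ f₁ ∈ F, ∃ f₂ ∈ F, sigma' f₁ ∩ sigma' f₂ = {p} := by
  classical
  obtain ⟨φ, hφ⟩ := hdef
  obtain ⟨x, hxF, hx1⟩ := hne
  intro p hp
  set w : Multiset Nat.Primes := PNat.factorMultiset x with hw_def
  have hw : w ≠ 0 := by
    intro h
    apply hx1
    have hx := PNat.prod_factorMultiset x
    rw [show PNat.factorMultiset x = w from rfl, h] at hx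
    exact hx.symm.trans PrimeMultiset.prod_zero |>.symm ▸ rfl
  obtain ⟨q, hq⟩ := Multiset.exists_mem_of_ne_zero hw
  set P : Nat.Primes := ⟨(p : ℕ), hp⟩ with hP_def
  have hPp : (P : ℕ+) = p := rfl
  set σ₁ : Equiv.Perm Nat.Primes := Equiv.swap P q with hσ₁_def
  set T : Set Nat.Primes := {s | s ∈ w} with hT_def
  have hT : T.Finite := w.finite_toSet
  set A : Set Nat.Primes := σ₁ '' T ∪ {P} with hA_def
  have hA : A.Finite := (hT.image σ₁).union (Set.finite_singleton P)
  have hPA : P ∈ A := Set.mem_union_right _ rfl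
  -- an injection from T \ {q} into Aᶜ
  haveI : Finite ↥(T \ {q} : Set _) := (hT.diff (t := {q})).to_subtype
  haveI : Infinite ↥(Aᶜ : Set Nat.Primes) := hA.infinite_compl.to_subtype
  obtain ⟨enc, henc⟩ := exists_injective_nat ↥(T \ {q} : Set _)
  set nemb := Infinite.natEmbedding ↥(Aᶜ : Set Nat.Primes) with hnemb_def
  set j : ↥(T \ {q} : Set _) → ↥(Aᶜ : Set Nat.Primes) := fun a => nemb (enc a) with hj_def
  have hjinj : Function.Injective j := fun a b h => henc (nemb.injective h)
  set f : Nat.Primes → Nat.Primes :=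
    fun s => if h : s ∈ (T \ {q} : Set _) then (j ⟨s, h⟩ : Nat.Primes) else P with hf_def
  have hfq : f q = P := by
    rw [hf_def]; simp
  have hfmem : ∀ s, (h : s ∈ (T \ {q} : Set _)) → f s ∈ (Aᶜ : Set Nat.Primes) := by
    intro s h
    rw [hf_def]
    simp only [h, dif_pos]
    exact (j ⟨s, h⟩).2
  have hfinj : Set.InjOn f T := by
    intro a ha b hb hab
    by_cases haq : a ∈ (T \ {q} : Set _) <;> by_cases hbq : b ∈ (T \ {q} : Set _)
    · have h1 : f a = (j ⟨a, haq⟩ : Nat.Primes) := by simp only [hf_def]; exact dif_pos haq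
      have h2 : f b = (j ⟨b, hbq⟩ : Nat.Primes) := by simp only [hf_def]; exact dif_pos hbq
      rw [h1, h2] at hab
      have h3 := hjinj (Subtype.ext hab)
      exact Subtype.mk_eq_mk.1 h3
    · exfalso
      have h1 : f a ∈ (Aᶜ : Set Nat.Primes) := hfmem a haq
      have h2 : f b = P := by rw [hf_def]; simp [hbq]
      rw [hab, h2] at h1; exact h1 hPA
    · exfalso
      have h1 : f b ∈ (Aᶜ : Set Nat.Primes) := hfmem b hbq
      have h2 : f a = P := by rw [hf_def]; simp [haq]
      rw [← hab, h2] at h1; exact h1 hPA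
    · have ha' : a = q := by
        by_contra h; exact haq ⟨ha, h⟩
      have hb' : b = q := by
        by_contra h; exact hbq ⟨hb, h⟩
      rw [ha', hb']
  obtain ⟨σ₂, hσ₂⟩ := exists_perm_extend f T hT hfinj
  refine ⟨permAut σ₁ x, mem_of_def hφ (permAut σ₁) hxF,
          permAut σ₂ x, mem_of_def hφ (permAut σ₂) hxF, ?_⟩
  have he₁ : permAut σ₁ x = PrimeMultiset.prod (Multiset.map σ₁ w) := rfl
  have he₂ : permAut σ₂ x = PrimeMultiset.prod (Multiset.map σ₂ w) := rfl
  rw [he₁, he₂]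
  ext y
  simp only [Set.mem_inter_iff, mem_sigma'_prod, Set.mem_singleton_iff]
  constructor
  · rintro ⟨⟨Y₁, hY₁, hYy₁⟩, ⟨Y₂, hY₂, hYy₂⟩⟩
    obtain ⟨s₁, hs₁, rfl⟩ := Multiset.mem_map.1 hY₁
    obtain ⟨s₂, hs₂, rfl⟩ := Multiset.mem_map.1 hY₂
    have hco : σ₁ s₁ = σ₂ s₂ :=
      Nat.Primes.coe_pnat_injective (hYy₁.trans hYy₂.symm)
    have hs₂T : s₂ ∈ T := hs₂
    have hσ₂s₂ : σ₂ s₂ = f s₂ := hσ₂ s₂ hs₂T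
    by_cases hcase : s₂ ∈ (T \ {q} : Set _)
    · exfalso
      have h1 : σ₂ s₂ ∈ (Aᶜ : Set Nat.Primes) := hσ₂s₂ ▸ hfmem s₂ hcase
      have h2 : σ₁ s₁ ∈ A := Set.mem_union_left _ ⟨s₁, hs₁, rfl⟩
      rw [hco] at h2
      exact h1 h2
    · have : s₂ = q := by
        by_contra h; exact hcase ⟨hs₂T, h⟩
      rw [← hYy₂, hσ₂s₂, this, hfq, hPp]
  · rintro rfl
    constructor
    · refine ⟨P, ?_, hPp⟩
      have : σ₁ q = P := Equiv.swap_apply_right P q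
      exact this ▸ Multiset.mem_map_of_mem σ₁ hq
    · refine ⟨P, ?_, hPp⟩
      have : σ₂ q = P := (hσ₂ q hq).trans hfq
      exact this ▸ Multiset.mem_map_of_mem σ₂ hq
end
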